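/- The modified ER algorithm (equivalently, the importance discounting and combination scheme) satisfies the consensus axiom: let H = {H_1,…,H_N} with N ≥ 2, fix a grade k, and suppose all L assessments are precisely assessed to grade H_k (β_{k,i} = 1 and β_{n,i} = 0 for n ≠ k, for every i), with normalized weights w_i ∈ [0,1] satisfying Σ_{i=1}^L w_i = 1. Then the extended Dempster combination of the importance-discounted IBBAs w_1 ⊙ m_1, …, w_L ⊙ m_L is well defined (all conflicts are 0), its Ω-mass ∏_{i=1}^L (1 − w_i) is strictly less than 1, and after normalization (dividing by 1 minus the Ω-mass) the resulting belief degrees are β_k = 1, β_n = 0 for n ≠ k, and β_H = 0. -/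
import Mathlib


open Finset

/-- A basic belief assignment (BBA) on a finite nonempty frame `Θ`. -/
def IsBBA {Θ : Type*} [Fintype Θ] [DecidableEq Θ] (m : Finset Θ → ℝ) : Prop :=
  m ∅ = 0 ∧ (∀ A, 0 ≤ m A) ∧ ∑ A : Finset Θ, m A = 1

/-- Shafer's reliability discounting of `m` by the reliability factor `α`. -/
def rdiscount {Θ : Type*} [Fintype Θ] [DecidableEq Θ] (α : ℝ) (m : Finset Θ → ℝ) :
    Finset Θ → ℝ :=
  fun A => if A = Finset.univ then α * m A + (1 - α) else α * m A

/-- The conflict between two mass functions. -/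
def conflict {Θ : Type*} [Fintype Θ] [DecidableEq Θ] (m1 m2 : Finset Θ → ℝ) : ℝ :=
  ∑ B : Finset Θ, ∑ C : Finset Θ, if B ∩ C = ∅ then m1 B * m2 C else 0

/-- Dempster's rule of combination. -/
noncomputable def dempster {Θ : Type*} [Fintype Θ] [DecidableEq Θ] (m1 m2 : Finset Θ → ℝ) :
    Finset Θ → ℝ :=
  fun A => if A = ∅ then 0
    else (∑ B : Finset Θ, ∑ C : Finset Θ, if B ∩ C = A then m1 B * m2 C else 0) /
      (1 - conflict m1 m2)

/-- Iterated Dempster combination of `d 0, …, d i`. -/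
noncomputable def combUpTo {Θ : Type*} [Fintype Θ] [DecidableEq Θ] (d : ℕ → Finset Θ → ℝ) :
    ℕ → Finset Θ → ℝ
  | 0 => d 0
  | i + 1 => dempster (combUpTo d (i)) (d (i + 1))

/-- The assessment BBA on the frame `{H_1,…,H_N}` determined by belief degrees `β`. -/
def assessBBA {N : ℕ} (β : Fin N → ℝ) : Finset (Fin N) → ℝ :=
  fun A => if A = Finset.univ then 1 - ∑ n, β n
    else ∑ n : Fin N, if A = {n} then β n else 0

/-- An importance basic belief assignment (IBBA): `ω` is the mass on the
indecisiveness element `Ω`. -/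
def IsIBBA {Θ : Type*} [Fintype Θ] [DecidableEq Θ] (m : Finset Θ → ℝ) (ω : ℝ) : Prop :=
  m ∅ = 0 ∧ (∀ A, 0 ≤ m A) ∧ 0 ≤ ω ∧ (∑ A : Finset Θ, m A) + ω = 1

/-- Importance discounting of a BBA `m` by the importance factor `β`. -/
def impDiscount {Θ : Type*} [Fintype Θ] [DecidableEq Θ] (β : ℝ) (m : Finset Θ → ℝ) :
    (Finset Θ → ℝ) × ℝ :=
  (fun A => β * m A, 1 - β)

/-- The extended Dempster rule of combination of two IBBAs. -/
noncomputable def edComb {Θ : Type*} [Fintype Θ] [DecidableEq Θ]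
    (p q : (Finset Θ → ℝ) × ℝ) : (Finset Θ → ℝ) × ℝ :=
  (fun A => if A = ∅ then 0
      else (1 - conflict p.1 q.1)⁻¹ *
        ((∑ B : Finset Θ, ∑ C : Finset Θ, if B ∩ C = A then p.1 B * q.1 C else 0) +
          p.1 A * q.2 + p.2 * q.1 A),
    (1 - conflict p.1 q.1)⁻¹ * (p.2 * q.2))

/-- Iterated extended Dempster combination of `d 0, …, d i`. -/
noncomputable def edCombUpTo {Θ : Type*} [Fintype Θ] [DecidableEq Θ] (d : ℕ → (Finset Θ → ℝ) × ℝ) :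
    ℕ → (Finset Θ → ℝ) × ℝ
  | 0 => d 0
  | i + 1 => edComb (edCombUpTo d i) (d (i + 1))

/-- The singleton conflict `Σ_{j≠p} m1({H_j})·m2({H_p})`. -/
def singConflict {N : ℕ} (m1 m2 : Finset (Fin N) → ℝ) : ℝ :=
  ∑ j : Fin N, ∑ p : Fin N, if j ≠ p then m1 {j} * m2 {p} else 0

/-- One recursive aggregation step of the original ER algorithm. -/
noncomputable def erStep {N : ℕ} (s : (Fin N → ℝ) × ℝ) (b : Fin N → ℝ) (h : ℝ) : (Fin N → ℝ) × ℝ :=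
  (fun n => (1 - ∑ j : Fin N, ∑ p : Fin N, if p ≠ j then s.1 j * b p else 0)⁻¹ *
      (s.1 n * b n + s.1 n * h + s.2 * b n),
   (1 - ∑ j : Fin N, ∑ p : Fin N, if p ≠ j then s.1 j * b p else 0)⁻¹ * (s.2 * h))

/-- The recursively defined masses of the original ER algorithm. -/
noncomputable def erSeq {N : ℕ} (b : ℕ → Fin N → ℝ) (h : ℕ → ℝ) : ℕ → (Fin N → ℝ) × ℝ
  | 0 => (b 0, h 0)
  | i + 1 => erStep (erSeq b h i) (b (i + 1)) (h (i + 1))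

/-- One recursive aggregation step of the modified ER algorithm, on triples
`(masses on singletons, m̃_H, m̄_H)`. -/
noncomputable def merStep {N : ℕ} (s : (Fin N → ℝ) × ℝ × ℝ) (b : Fin N → ℝ) (tld brd : ℝ) :
    (Fin N → ℝ) × ℝ × ℝ :=
  (fun n => (1 - ∑ j : Fin N, ∑ p : Fin N, if p ≠ j then s.1 j * b p else 0)⁻¹ *
      (s.1 n * b n + s.1 n * (brd + tld) + (s.2.2 + s.2.1) * b n),
   (1 - ∑ j : Fin N, ∑ p : Fin N, if p ≠ j then s.1 j * b p else 0)⁻¹ *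
      (s.2.1 * tld + s.2.1 * brd + s.2.2 * tld),
   (1 - ∑ j : Fin N, ∑ p : Fin N, if p ≠ j then s.1 j * b p else 0)⁻¹ * (s.2.2 * brd))

/-- The recursively defined masses of the modified ER algorithm. -/
noncomputable def merSeq {N : ℕ} (b : ℕ → Fin N → ℝ) (tld brd : ℕ → ℝ) : ℕ → (Fin N → ℝ) × ℝ × ℝ
  | 0 => (b 0, tld 0, brd 0)
  | i + 1 => merStep (merSeq b tld brd i) (b (i + 1)) (tld (i + 1)) (brd (i + 1))

/-- Reliability-importance discounting: the mass-function part `m^{α,β}`. -/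
def riDiscount {Θ : Type*} [Fintype Θ] [DecidableEq Θ] (α β : ℝ) (m : Finset Θ → ℝ) :
    Finset Θ → ℝ :=
  fun A => if A = Finset.univ then α * β * m A + (1 - α) * β else α * β * m A

lemma conflict_single {N : ℕ} (k : Fin N) (a b : ℝ) :
    conflict (fun A => if A = ({k} : Finset (Fin N)) then a else 0)
      (fun A => if A = ({k} : Finset (Fin N)) then b else 0) = 0 := by
  unfold conflict
  apply Finset.sum_eq_zero; intro B _
  apply Finset.sum_eq_zero; intro C _
  by_cases hB : B = {k}
  · by_cases hC : C = {k}
    · subst hB; subst hC; simp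
    · simp [hC]
  · simp [hB]

lemma comb_single {N : ℕ} (k : Fin N) (a b : ℝ) (A : Finset (Fin N)) :
    (∑ B : Finset (Fin N), ∑ C : Finset (Fin N),
      if B ∩ C = A then (if B = {k} then a else 0) * (if C = {k} then b else 0) else 0)
    = if A = {k} then a * b else 0 := by
  have h : ∀ B C : Finset (Fin N),
      (if B ∩ C = A then (if B = {k} then a else 0) * (if C = {k} then b else 0) else 0)
      = if B = {k} then (if C = {k} then (if A = {k} then a * b else 0) else 0) else 0 := by
    intro B C
    by_cases hB : B = {k}
    · by_cases hC : C = {k}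
      · subst hB; subst hC; simp [Finset.inter_self, eq_comm]
      · simp [hC]
    · simp [hB]
  simp only [h]
  simp

/-- the modified ER algorithm (the importance discounting and
combination scheme) satisfies the consensus axiom. -/
theorem modifiedER_consensus (N L : ℕ) (hN : 2 ≤ N) (hL : 1 ≤ L)
    (k : Fin N) (w : ℕ → ℝ) (hw : ∀ i < L, 0 ≤ w i ∧ w i ≤ 1)
    (hwsum : ∑ i ∈ Finset.range L, w i = 1)
    -- the importance-discounted IBBAs of the precise assessments to H_k
    (d : ℕ → (Finset (Fin N) → ℝ) × ℝ)
    (hd : ∀ j, d j = impDiscount (w j)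
      (assessBBA (fun n => if n = k then (1 : ℝ) else 0))) :
    (∀ i, i + 1 < L → conflict (edCombUpTo d i).1 (d (i + 1)).1 = 0) ∧
    (edCombUpTo d (L - 1)).2 = ∏ i ∈ Finset.range L, (1 - w i) ∧
    (edCombUpTo d (L - 1)).2 < 1 ∧
    (edCombUpTo d (L - 1)).1 {k} / (1 - (edCombUpTo d (L - 1)).2) = 1 ∧
    (∀ n : Fin N, n ≠ k →
      (edCombUpTo d (L - 1)).1 {n} / (1 - (edCombUpTo d (L - 1)).2) = 0) ∧
    (edCombUpTo d (L - 1)).1 Finset.univ / (1 - (edCombUpTo d (L - 1)).2) = 0 := by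
  have hNe : (Finset.univ : Finset (Fin N)) ≠ {k} := by
    intro h
    have : (Finset.univ : Finset (Fin N)).card = 1 := by rw [h]; simp
    rw [Finset.card_univ, Fintype.card_fin] at this
    omega
  -- the discounted masses
  have hd1 : ∀ j, (d j).1 = fun A => if A = ({k} : Finset (Fin N)) then w j else 0 := by
    intro j
    funext A
    rw [hd j]
    simp only [impDiscount, assessBBA]
    by_cases h1 : A = Finset.univ
    · subst h1
      simp [hNe]
    · simp only [h1, if_false]
      by_cases h2 : A = {k}
      · subst h2
        rw [if_pos rfl]
        rw [Finset.sum_eq_single k]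
        · simp
        · intro n _ hn
          simp [Ne.symm hn, Finset.singleton_inj, hn]
        · simp
      · rw [if_neg h2, Finset.sum_eq_zero, mul_zero]
        intro n _
        by_cases h3 : A = {n}
        · subst h3
          have : n ≠ k := by
            intro h; exact h2 (by rw [h])
          simp [this]
        · simp [h3]
  have hd2 : ∀ j, (d j).2 = 1 - w j := by
    intro j; rw [hd j]; rfl
  -- the key induction
  have key : ∀ i, (edCombUpTo d i).1 =
      (fun A => if A = ({k} : Finset (Fin N)) then
        1 - ∏ j ∈ Finset.range (i + 1), (1 - w j) else 0) ∧
      (edCombUpTo d i).2 = ∏ j ∈ Finset.range (i + 1), (1 - w j) := by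
    intro i
    induction i with
    | zero =>
      constructor
      · rw [show edCombUpTo d 0 = d 0 from rfl, hd1 0]
        funext A
        by_cases h : A = {k} <;> simp [h]
      · rw [show edCombUpTo d 0 = d 0 from rfl, hd2 0]
        simp
    | succ i ih =>
      obtain ⟨ih1, ih2⟩ := ih
      set P := ∏ j ∈ Finset.range (i + 1), (1 - w j) with hP
      have hconf : conflict (edCombUpTo d i).1 (d (i + 1)).1 = 0 := by
        rw [ih1, hd1 (i + 1)]; exact conflict_single k _ _
      have hstep : edCombUpTo d (i + 1) = edComb (edCombUpTo d i) (d (i + 1)) := rfl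
      constructor
      · funext A
        rw [hstep]
        simp only [edComb, hconf, sub_zero, inv_one, one_mul]
        by_cases hA : A = ∅
        · subst hA
          rw [if_pos rfl, if_neg (Ne.symm (Finset.singleton_ne_empty k))]
        · rw [if_neg hA]
          rw [ih1, hd1 (i + 1), ih2, hd2 (i + 1)]
          rw [comb_single]
          by_cases h : A = {k}
          · subst h
            simp only [if_pos rfl, if_true, ite_true]
            rw [Finset.prod_range_succ, ← hP]
            ring
          · simp [h]
      · rw [hstep]
        simp only [edComb, hconf, sub_zero, inv_one, one_mul]
        rw [ih2, hd2 (i + 1), Finset.prod_range_succ]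
  -- products and positivity
  have hL1 : L - 1 + 1 = L := by omega
  obtain ⟨key1, key2⟩ := key (L - 1)
  rw [hL1] at key1 key2
  have hPlt : ∏ i ∈ Finset.range L, (1 - w i) < 1 := by
    have hex : ∃ j ∈ Finset.range L, 0 < w j := by
      by_contra h
      push_neg at h
      have : ∑ i ∈ Finset.range L, w i ≤ 0 := by
        apply Finset.sum_nonpos
        intro i hi; exact h i hi
      linarith [hwsum]
    obtain ⟨j, hjL, hjpos⟩ := hex
    rw [← Finset.prod_erase_mul _ _ hjL]
    have hrest : ∏ i ∈ (Finset.range L).erase j, (1 - w i) ≤ 1 := by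
      apply Finset.prod_le_one
      · intro i hi
        have := hw i (Finset.mem_range.mp (Finset.mem_of_mem_erase hi))
        linarith [this.2]
      · intro i hi
        have := hw i (Finset.mem_range.mp (Finset.mem_of_mem_erase hi))
        linarith [this.1]
    have hrest0 : 0 ≤ ∏ i ∈ (Finset.range L).erase j, (1 - w i) := by
      apply Finset.prod_nonneg
      intro i hi
      have := hw i (Finset.mem_range.mp (Finset.mem_of_mem_erase hi))
      linarith [this.2]
    have hwj1 : 1 - w j < 1 := by linarith
    have hwj0 : 0 ≤ 1 - w j := by
      have := hw j (Finset.mem_range.mp hjL)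
      linarith [this.2]
    calc (∏ i ∈ (Finset.range L).erase j, (1 - w i)) * (1 - w j)
        ≤ 1 * (1 - w j) := by apply mul_le_mul_of_nonneg_right hrest hwj0
      _ = 1 - w j := one_mul _
      _ < 1 := hwj1
  have hden : (1 : ℝ) - ∏ i ∈ Finset.range L, (1 - w i) ≠ 0 := by linarith
  refine ⟨?_, ?_, ?_, ?_, ?_, ?_⟩
  · intro i _
    rw [(key i).1, hd1 (i + 1)]
    exact conflict_single k _ _
  · exact key2
  · rw [key2]; exact hPlt
  · rw [key1, key2]
    simp only [if_pos rfl]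
    exact div_self hden
  · intro n hn
    have : ({n} : Finset (Fin N)) ≠ {k} := by
      simp [Finset.singleton_inj, hn]
    simp only [key1, key2, if_neg this, zero_div]
  · simp only [key1, key2, if_neg hNe, zero_div]
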